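/- arXiv:2507.09811 — 5 statements merged into one kernel-verified Lean document; each statement's English description precedes it below -/
import Mathlib

section
/- Let V be a finite-dimensional vector space over a field F with a basis indexed by {1,…,M}, and for 1 ≤ a ≤ b ≤ M let Γ[a,b] denote the span of the basis vectors with indices in [a,b]. Let [a_1,b_1],…,[a_k,b_k],[c_1,d_1],…,[c_ℓ,d_ℓ],[c,d] be integer intervals contained in [1,M] such that (⋃_{i=1}^k [a_i,b_i]) ∩ [c,d] = ∅. Then for any subspaces X_1,…,X_k, Y_1,…,Y_ℓ, Y of a vector space W over F, one has (Σ_{i=1}^k X_i ⊗ Γ[a_i,b_i]) ∩ (Σ_{j=1}^ℓ Y_j ⊗ Γ[c_j,d_j] + Y ⊗ Γ[c,d]) = (Σ_{i=1}^k X_i ⊗ Γ[a_i,b_i]) ∩ (Σ_{j=1}^ℓ Y_j ⊗ Γ[c_j,d_j]). -/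
open TensorProduct

/-- The subspace of `M ⊗ N` spanned by elementary tensors `u ⊗ w` with `u ∈ U`, `w ∈ W`. -/
def tensorSub {F M N : Type*} [Field F] [AddCommGroup M] [Module F M]
    [AddCommGroup N] [Module F N] (U : Submodule F M) (W : Submodule F N) :
    Submodule F (M ⊗[F] N) :=
  Submodule.span F {x | ∃ u ∈ U, ∃ w ∈ W, x = u ⊗ₜ[F] w}

/-- `Γ[a,b] ⊆ F^M`: the span of the standard basis vectors `e_s` with `a ≤ s ≤ b`
(indices `1,…,M`, so `e_s` corresponds to `Pi.single ⟨s-1⟩ 1`). -/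
def Gamma (F : Type*) [Field F] (M : ℕ) (a b : ℕ) : Submodule F (Fin M → F) :=
  Submodule.span F {x | ∃ i : Fin M, a ≤ (i : ℕ) + 1 ∧ (i : ℕ) + 1 ≤ b ∧
    x = Pi.single i (1 : F)}

/-- Projection killing coordinates with index (plus one) in `[c,d]`. -/
def projOut (F : Type*) [Field F] (M c d : ℕ) : (Fin M → F) →ₗ[F] (Fin M → F) where
  toFun x i := if c ≤ (i : ℕ) + 1 ∧ (i : ℕ) + 1 ≤ d then 0 else x i
  map_add' x y := by funext i; dsimp; split <;> simp
  map_smul' r x := by funext i; dsimp; split <;> simp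

@[simp] lemma projOut_apply {F : Type*} [Field F] {M c d : ℕ} (x : Fin M → F) (j : Fin M) :
    projOut F M c d x j = if c ≤ (j : ℕ) + 1 ∧ (j : ℕ) + 1 ≤ d then 0 else x j := rfl

lemma projOut_fix {F : Type*} [Field F] {M a b c d : ℕ}
    (h : ∀ s, a ≤ s → s ≤ b → ¬(c ≤ s ∧ s ≤ d)) :
    ∀ w ∈ Gamma F M a b, projOut F M c d w = w := by
  have : Gamma F M a b ≤ LinearMap.ker (projOut F M c d - LinearMap.id) := by
    rw [Gamma, Submodule.span_le]
    rintro _ ⟨i, hi1, hi2, rfl⟩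
    simp only [SetLike.mem_coe, LinearMap.mem_ker, LinearMap.sub_apply, LinearMap.id_apply,
      sub_eq_zero]
    funext j
    rw [projOut_apply]
    split
    · rename_i hj
      have hne : j ≠ i := by
        rintro rfl; exact h _ hi1 hi2 hj
      rw [Pi.single_eq_of_ne hne]
    · rfl
  intro w hw
  have := this hw
  rw [LinearMap.mem_ker, LinearMap.sub_apply, LinearMap.id_apply, sub_eq_zero] at this
  exact this

lemma projOut_kill {F : Type*} [Field F] {M c d : ℕ} :
    Gamma F M c d ≤ LinearMap.ker (projOut F M c d) := by
  rw [Gamma, Submodule.span_le]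
  rintro _ ⟨i, hi1, hi2, rfl⟩
  simp only [SetLike.mem_coe, LinearMap.mem_ker]
  funext j
  rw [projOut_apply, Pi.zero_apply]
  split
  · rfl
  · rename_i hj
    have hne : j ≠ i := by rintro rfl; exact hj ⟨hi1, hi2⟩
    rw [Pi.single_eq_of_ne hne]

lemma projOut_map {F : Type*} [Field F] {M a b c d : ℕ} :
    Submodule.map (projOut F M c d) (Gamma F M a b) ≤ Gamma F M a b := by
  rw [Submodule.map_le_iff_le_comap, Gamma, Submodule.span_le]
  rintro _ ⟨i, hi1, hi2, rfl⟩
  simp only [SetLike.mem_coe, Submodule.mem_comap]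
  by_cases hi : c ≤ (i : ℕ) + 1 ∧ (i : ℕ) + 1 ≤ d
  · have : projOut F M c d (Pi.single i (1:F)) = 0 := by
      funext j
      rw [projOut_apply, Pi.zero_apply]
      split
      · rfl
      · rename_i hj
        have hne : j ≠ i := by rintro rfl; exact hj hi
        rw [Pi.single_eq_of_ne hne]
    rw [this]; exact Submodule.zero_mem _
  · have : projOut F M c d (Pi.single i (1:F)) = Pi.single i (1:F) := by
      funext j
      rw [projOut_apply]
      split
      · rename_i hj
        have hne : j ≠ i := by rintro rfl; exact hi hj
        rw [Pi.single_eq_of_ne hne]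
      · rfl
    rw [this]
    exact Submodule.subset_span ⟨i, hi1, hi2, rfl⟩

theorem interval_tensor_intersection (F : Type*) [Field F] (M : ℕ)
    (W : Type*) [AddCommGroup W] [Module F W]
    (k ℓ : ℕ) (a b : Fin k → ℕ) (c' d' : Fin ℓ → ℕ) (c d : ℕ)
    (hab : ∀ i, 1 ≤ a i ∧ a i ≤ b i ∧ b i ≤ M)
    (hcd' : ∀ j, 1 ≤ c' j ∧ c' j ≤ d' j ∧ d' j ≤ M)
    (hcd : 1 ≤ c ∧ c ≤ d ∧ d ≤ M)
    (hdisj : (⋃ i, Set.Icc (a i) (b i)) ∩ Set.Icc c d = ∅)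
    (X : Fin k → Submodule F W) (Y' : Fin ℓ → Submodule F W) (Y : Submodule F W) :
    (⨆ i, tensorSub (X i) (Gamma F M (a i) (b i))) ⊓
        ((⨆ j, tensorSub (Y' j) (Gamma F M (c' j) (d' j))) ⊔ tensorSub Y (Gamma F M c d))
      = (⨆ i, tensorSub (X i) (Gamma F M (a i) (b i))) ⊓
          (⨆ j, tensorSub (Y' j) (Gamma F M (c' j) (d' j))) := by
  set P := projOut F M c d
  set φ := LinearMap.lTensor W P with hφ
  have hdisj' : ∀ i s, a i ≤ s → s ≤ b i → ¬(c ≤ s ∧ s ≤ d) := by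
    intro i s h1 h2 h3
    have : s ∈ (⋃ i, Set.Icc (a i) (b i)) ∩ Set.Icc c d :=
      ⟨Set.mem_iUnion.2 ⟨i, h1, h2⟩, h3.1, h3.2⟩
    rw [hdisj] at this
    exact this
  -- φ fixes the left side
  have hfix : (⨆ i, tensorSub (X i) (Gamma F M (a i) (b i)))
      ≤ LinearMap.ker (φ - LinearMap.id) := by
    apply iSup_le
    intro i
    rw [tensorSub, Submodule.span_le]
    rintro _ ⟨u, hu, w, hw, rfl⟩
    simp only [SetLike.mem_coe, LinearMap.mem_ker, LinearMap.sub_apply, LinearMap.id_apply,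
      sub_eq_zero, hφ, LinearMap.lTensor_tmul]
    rw [projOut_fix (hdisj' i) w hw]
  -- φ kills the Y part
  have hkill : tensorSub Y (Gamma F M c d) ≤ LinearMap.ker φ := by
    rw [tensorSub, Submodule.span_le]
    rintro _ ⟨u, hu, w, hw, rfl⟩
    simp only [SetLike.mem_coe, LinearMap.mem_ker, hφ, LinearMap.lTensor_tmul]
    rw [show P w = 0 from projOut_kill hw, TensorProduct.tmul_zero]
  -- φ preserves the Y' part
  have hpres : (⨆ j, tensorSub (Y' j) (Gamma F M (c' j) (d' j)))
      ≤ Submodule.comap φ (⨆ j, tensorSub (Y' j) (Gamma F M (c' j) (d' j))) := by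
    apply iSup_le
    intro j
    rw [tensorSub, Submodule.span_le]
    rintro _ ⟨u, hu, w, hw, rfl⟩
    simp only [SetLike.mem_coe, Submodule.mem_comap, hφ, LinearMap.lTensor_tmul]
    refine le_iSup (fun j => tensorSub (Y' j) (Gamma F M (c' j) (d' j))) j ?_
    exact Submodule.subset_span ⟨u, hu, P w, projOut_map ⟨w, hw, rfl⟩, rfl⟩
  apply le_antisymm
  · rintro x ⟨hx1, hx2⟩
    obtain ⟨y, hy, z, hz, rfl⟩ := Submodule.mem_sup.1 hx2
    refine ⟨hx1, ?_⟩
    have h1 : φ (y + z) = y + z := by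
      have := hfix hx1
      rw [LinearMap.mem_ker, LinearMap.sub_apply, LinearMap.id_apply, sub_eq_zero] at this
      exact this
    have h2 : φ z = 0 := hkill hz
    have h3 : φ y ∈ (⨆ j, tensorSub (Y' j) (Gamma F M (c' j) (d' j))) := hpres hy
    rw [map_add, h2, add_zero] at h1
    rw [← h1]
    exact h3
  · exact inf_le_inf_left _ (le_sup_left)
end

section
/- Let G be a graph with a dual (n,d)-representation {X_v : v ∈ V(G)} over a field F. If A, B ⊆ V(G) are vertex sets with B a clique, A ∩ B = ∅, and every vertex of A adjacent to every vertex of B, then dim(X_A + X_B) = dim(X_A) + |B|·d, where X_S = Σ_{v∈S} X_v. -/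
open Module

theorem dim_sum_clique (F : Type*) [Field F] {V : Type*} (G : SimpleGraph V)
    (n d : ℕ) (X : V → Submodule F (Fin n → F))
    (hdim : ∀ v, finrank F (X v) = d)
    (hrep : ∀ v, X v ⊓ (⨆ w ∈ G.neighborSet v, X w) = ⊥)
    (A B : Finset V) (hB : G.IsClique (B : Set V)) (hAB : Disjoint A B)
    (hadj : ∀ a ∈ A, ∀ b ∈ B, G.Adj a b) :
    finrank F ↥((⨆ v ∈ A, X v) ⊔ (⨆ v ∈ B, X v))
      = finrank F ↥(⨆ v ∈ A, X v) + B.card * d := by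
  classical
  induction B using Finset.induction_on with
  | empty =>
    have h0 : (⨆ v ∈ (∅ : Finset V), X v) = ⊥ :=
      le_bot_iff.mp (iSup₂_le fun v hv => absurd hv (Finset.notMem_empty v))
    rw [h0, sup_bot_eq, Finset.card_empty, Nat.zero_mul, Nat.add_zero]
  | @insert b B' hbB' ih =>
    have hBsub : (B' : Set V) ⊆ (insert b B' : Finset V) := by
      intro x hx; simp [hx]
    have hB' : G.IsClique (B' : Set V) := hB.subset (by simpa using hBsub)
    have hAB' : Disjoint A B' := hAB.mono_right (Finset.subset_insert b B')
    have hadj' : ∀ a ∈ A, ∀ c ∈ B', G.Adj a c := fun a ha c hc =>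
      hadj a ha c (Finset.mem_insert_of_mem hc)
    have key : X b ⊓ ((⨆ v ∈ A, X v) ⊔ (⨆ v ∈ B', X v)) = ⊥ := by
      refine le_bot_iff.mp ?_
      refine le_trans (inf_le_inf_left (X b) ?_) (le_of_eq (hrep b))
      refine sup_le ?_ ?_
      · refine iSup₂_le fun a ha => ?_
        have : a ∈ G.neighborSet b := (hadj a ha b (Finset.mem_insert_self b B')).symm
        exact le_iSup₂_of_le a this le_rfl
      · refine iSup₂_le fun c hc => ?_
        have hne : b ≠ c := fun h => hbB' (h ▸ hc)
        have : c ∈ G.neighborSet b :=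
          hB (Finset.mem_insert_self b B') (by simp [hc]) hne
        exact le_iSup₂_of_le c this le_rfl
    have hsup : (⨆ v ∈ (insert b B' : Finset V), X v) = X b ⊔ ⨆ v ∈ B', X v :=
      Finset.iSup_insert b B' X
    rw [hsup, ← sup_assoc, sup_comm (⨆ v ∈ A, X v) (X b), sup_assoc]
    have := Submodule.finrank_sup_add_finrank_inf_eq (X b)
      ((⨆ v ∈ A, X v) ⊔ (⨆ v ∈ B', X v))
    rw [key] at this
    simp only [finrank_bot, add_zero] at this
    rw [this, ih hB' hAB' hadj', hdim b, Finset.card_insert_of_notMem hbB']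
    ring
end

section
/- Let {X_{(i,k)} : 1 ≤ i ≤ m, k ∈ {0,1}} ∪ {X_z} be a dual (n,d)-representation of the Mycielskian M_2(K_m) over a field F, with m ≥ 2. Then for every i, dim(X_{(i,0)} ∩ X_{(i,1)}) ≥ (m+1)d − n. -/
open Module

/-- The generalized Mycielskian `M_r(K_m)` of the complete graph `K_m`:
vertices are pairs `(i,k)` with `i ∈ Fin m`, `k ∈ Fin r`, plus an apex `z`. -/
def mycK (m r : ℕ) : SimpleGraph ((Fin m × Fin r) ⊕ Unit) :=
  SimpleGraph.fromRel (fun x y =>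
    match x, y with
    | .inl (v, i), .inl (w, j) =>
        v ≠ w ∧ (((i : ℕ) = 0 ∧ (j : ℕ) = 0) ∨ (j : ℕ) = (i : ℕ) + 1)
    | .inl (_, i), .inr _ => (i : ℕ) = r - 1
    | _, _ => False)

theorem mycK_adj0 {m : ℕ} {k j : Fin m} (h : k ≠ j) (b : Fin 2) :
    (mycK m 2).Adj (.inl (k, 0)) (.inl (j, b)) := by
  have hne : (Sum.inl (k, (0:Fin 2)) : (Fin m × Fin 2) ⊕ Unit) ≠ .inl (j, b) := by
    simp [h]
  refine ⟨hne, Or.inl ⟨h, ?_⟩⟩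
  fin_cases b <;> simp

theorem finrank_biSup_of_disjoint {F V : Type*} [Field F] [AddCommGroup V] [Module F V]
    [FiniteDimensional F V] {ι : Type*} [DecidableEq ι] (p : ι → Submodule F V)
    (s : Finset ι)
    (hs : ∀ k ∈ s, Disjoint (p k) (⨆ l ∈ s.erase k, p l)) :
    finrank F ↥(⨆ k ∈ s, p k) = ∑ k ∈ s, finrank F ↥(p k) := by
  induction s using Finset.induction_on with
  | empty => simp
  | @insert a t ha ih =>
    rw [Finset.iSup_insert, Finset.sum_insert ha]
    have hd : Disjoint (p a) (⨆ l ∈ t, p l) := by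
      have := hs a (Finset.mem_insert_self a t)
      rwa [Finset.erase_insert ha] at this
    have := Submodule.finrank_sup_add_finrank_inf_eq (p a) (⨆ l ∈ t, p l)
    rw [hd.eq_bot, finrank_bot, add_zero] at this
    rw [this, ih]
    intro k hk
    refine (hs k (Finset.mem_insert_of_mem hk)).mono_right ?_
    exact iSup_le fun l => iSup_le fun hl => le_iSup₂_of_le l
      (Finset.mem_erase_of_ne_of_mem (Finset.ne_of_mem_erase hl)
        (Finset.mem_insert_of_mem (Finset.mem_of_mem_erase hl))) le_rfl

theorem dim_inf_levels_M2 (F : Type*) [Field F] (m n d : ℕ) (hm : 2 ≤ m)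
    (X : (Fin m × Fin 2) ⊕ Unit → Submodule F (Fin n → F))
    (hdim : ∀ u, finrank F (X u) = d)
    (hrep : ∀ u, X u ⊓ (⨆ w ∈ (mycK m 2).neighborSet u, X w) = ⊥) :
    ∀ i : Fin m,
      ((m : ℤ) + 1) * d - n ≤ (finrank F ↥(X (.inl (i, 0)) ⊓ X (.inl (i, 1))) : ℤ) := by
  classical
  intro i
  set V0 := X (.inl (i, 0)) with hV0
  set V1 := X (.inl (i, 1)) with hV1
  set s : Finset (Fin m) := Finset.univ.erase i with hs
  set W : Submodule F (Fin n → F) := ⨆ k ∈ s, X (Sum.inl (k, (0:Fin 2))) with hW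
  -- neighbor sums
  have hXle : ∀ (u w : (Fin m × Fin 2) ⊕ Unit), (mycK m 2).Adj u w →
      X w ≤ ⨆ v ∈ (mycK m 2).neighborSet u, X v := fun u w h =>
    le_iSup₂_of_le w h le_rfl
  -- each summand of W is disjoint from the others
  have hdisW : ∀ k ∈ s, Disjoint (X (Sum.inl (k, (0:Fin 2))))
      (⨆ l ∈ s.erase k, X (Sum.inl (l, (0:Fin 2)))) := by
    intro k hk
    rw [disjoint_iff, ← le_bot_iff, ← hrep (Sum.inl (k, (0:Fin 2)))]
    refine le_inf inf_le_left (inf_le_right.trans ?_)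
    refine iSup_le fun l => iSup_le fun hl => ?_
    exact hXle _ _ (mycK_adj0 (Finset.ne_of_mem_erase hl).symm 0)
  -- (V0 ⊔ V1) disjoint from W
  have hdis : Disjoint (V0 ⊔ V1) W := by
    rw [disjoint_iff, eq_bot_iff]
    rintro v ⟨hv1, hv2⟩
    obtain ⟨μ, hsum⟩ := (Submodule.mem_iSup_finset_iff_exists_sum _ _).mp hv2
    have hzero : ∀ k ∈ s, (μ k : Fin n → F) = 0 := by
      intro k hk
      have hkni : k ≠ i := Finset.ne_of_mem_erase hk
      have hμk : (μ k : Fin n → F) = v - ∑ l ∈ s.erase k, (μ l : Fin n → F) := by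
        rw [← hsum, ← Finset.sum_erase_add s _ hk]; ring
      have hmem : (μ k : Fin n → F) ∈ X (Sum.inl (k, (0:Fin 2))) ⊓
          (⨆ w ∈ (mycK m 2).neighborSet (Sum.inl (k, (0:Fin 2))), X w) := by
        refine ⟨(μ k).2, ?_⟩
        rw [hμk]
        refine Submodule.sub_mem _ ?_ ?_
        · refine (sup_le (hXle _ _ (mycK_adj0 hkni 0)) (hXle _ _ (mycK_adj0 hkni 1))) ?_
          exact hv1
        · refine Submodule.sum_mem _ fun l hl => ?_
          exact hXle _ _ (mycK_adj0 (Finset.ne_of_mem_erase hl).symm 0) (μ l).2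
      have := hrep (Sum.inl (k, (0:Fin 2)))
      rw [this] at hmem
      exact hmem
    have : v = 0 := by
      rw [← hsum]
      exact Finset.sum_eq_zero hzero
    simp [this]
  -- dimension count
  have hWrank : finrank F ↥W = (m - 1) * d := by
    rw [hW, finrank_biSup_of_disjoint _ _ hdisW]
    rw [Finset.sum_congr rfl (fun k _ => hdim (Sum.inl (k, (0:Fin 2))))]
    rw [Finset.sum_const, smul_eq_mul, hs, Finset.card_erase_of_mem (Finset.mem_univ i),
      Finset.card_univ, Fintype.card_fin]
  have hle : finrank F ↥(V0 ⊔ V1) + finrank F ↥W ≤ n := by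
    have := Submodule.finrank_add_finrank_le_of_disjoint hdis
    rwa [Module.finrank_fintype_fun_eq_card, Fintype.card_fin] at this
  have hsupinf : finrank F ↥(V0 ⊔ V1) + finrank F ↥(V0 ⊓ V1) = d + d := by
    rw [Submodule.finrank_sup_add_finrank_inf_eq, hdim, hdim]
  -- arithmetic
  rw [hWrank] at hle
  have key : ((m:ℤ) + 1) * d = (((m - 1) * d : ℕ) : ℤ) + 2 * d := by
    push_cast [Nat.cast_sub (show 1 ≤ m by omega)]; ring
  have hleZ : (finrank F ↥(V0 ⊔ V1) : ℤ) + (((m - 1) * d : ℕ) : ℤ) ≤ n := by exact_mod_cast hle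
  have hsZ : (finrank F ↥(V0 ⊔ V1) : ℤ) + (finrank F ↥(V0 ⊓ V1) : ℤ) = d + d := by
    exact_mod_cast hsupinf
  linarith [key, hleZ, hsZ]
end

section
/- If the Mycielskian M_2(K_m) of the complete graph K_m (m ≥ 2) admits a dual (n,d)-representation over a field F, then n/d ≥ m + 1/m. -/
open Module

section Aux
variable {F V : Type*} [Field F] [AddCommGroup V] [Module F V] [FiniteDimensional F V]
variable {ι : Type*} [DecidableEq ι] {X : ι → Submodule F V}

omit [FiniteDimensional F V] in
lemma aux_inf_sup (hX : ∀ (i : ι) (s : Finset ι), i ∉ s → Disjoint (X i) (s.sup X)) :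
    ∀ (s t : Finset ι), (s.sup X) ⊓ (t.sup X) ≤ (s ∩ t).sup X := by
  intro s
  induction s using Finset.strongInduction with
  | _ s ih =>
    intro t
    by_cases hst : s ⊆ t
    · rw [Finset.inter_eq_left.mpr hst]
      exact inf_le_left
    · obtain ⟨a, has, hat⟩ := Finset.not_subset.mp hst
      have herase : s.sup X ⊓ t.sup X ≤ (s.erase a).sup X := by
        have hs : s.sup X = (s.erase a).sup X ⊔ X a := by
          conv_lhs => rw [← Finset.insert_erase has]
          rw [Finset.sup_insert, sup_comm]
        have hmod : ((s.erase a).sup X ⊔ X a) ⊓ ((s.erase a) ∪ t).sup X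
            = (s.erase a).sup X ⊔ (X a ⊓ ((s.erase a) ∪ t).sup X) :=
          sup_inf_assoc_of_le _ (Finset.sup_mono Finset.subset_union_left)
        have hdisj : X a ⊓ ((s.erase a) ∪ t).sup X = ⊥ :=
          (hX a _ (by simp [hat])).eq_bot
        calc s.sup X ⊓ t.sup X ≤ ((s.erase a).sup X ⊔ X a) ⊓ ((s.erase a) ∪ t).sup X := by
              rw [← hs]
              exact inf_le_inf le_rfl (Finset.sup_mono Finset.subset_union_right)
          _ = (s.erase a).sup X := by rw [hmod, hdisj, sup_bot_eq]
      have := ih (s.erase a) (Finset.erase_ssubset has) t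
      have hint : (s.erase a) ∩ t = s ∩ t := by
        ext x; simp only [Finset.mem_inter, Finset.mem_erase]
        exact ⟨fun ⟨⟨_, h⟩, h2⟩ => ⟨h, h2⟩, fun ⟨h1, h2⟩ => ⟨⟨fun he => hat (he ▸ h2), h1⟩, h2⟩⟩
      rw [hint] at this
      exact le_trans (le_inf herase inf_le_right) this

lemma aux_rank (hX : ∀ (i : ι) (s : Finset ι), i ∉ s → Disjoint (X i) (s.sup X))
    {d : ℕ} (hd : ∀ i, finrank F (X i) = d) (s : Finset ι) :
    finrank F (s.sup X : Submodule F V) = s.card * d := by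
  induction s using Finset.induction with
  | empty => simp [finrank_bot]
  | @insert a s ha ih =>
    rw [Finset.sup_insert, Finset.card_insert_of_notMem ha]
    have key := Submodule.finrank_sup_add_finrank_inf_eq (X a) (s.sup X)
    rw [(hX a s ha).eq_bot, finrank_bot, add_zero, hd a, ih] at key
    rw [key]; ring
end Aux

theorem haemers_lower_bound_M2 (F : Type*) [Field F] (m n d : ℕ) (hm : 2 ≤ m)
    (hd : 0 < d)
    (X : (Fin m × Fin 2) ⊕ Unit → Submodule F (Fin n → F))
    (hdim : ∀ u, finrank F (X u) = d)
    (hrep : ∀ u, X u ⊓ (⨆ w ∈ (mycK m 2).neighborSet u, X w) = ⊥) :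
    (m : ℝ) + 1 / m ≤ (n : ℝ) / d := by
  classical
  set G := mycK m 2
  set Xi : Fin m → Submodule F (Fin n → F) := fun i => X (.inl (i, 0)) with hXi
  set Z : Submodule F (Fin n → F) := X (.inr ()) with hZ
  have hdisj : ∀ u, Disjoint (X u) (⨆ w ∈ G.neighborSet u, X w) :=
    fun u => disjoint_iff.mpr (hrep u)
  have hle : ∀ (u w), w ∈ G.neighborSet u → X w ≤ ⨆ w' ∈ G.neighborSet u, X w' :=
    fun u w hw => le_biSup _ hw
  -- adjacency facts
  have hadj1 : ∀ i j : Fin m, j ≠ i →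
      (Sum.inl (j,(0:Fin 2))) ∈ G.neighborSet (.inl (i,(0:Fin 2))) := by
    intro i j hji; simp [G, mycK, SimpleGraph.fromRel_adj, hji, hji.symm]
  have hadj2 : ∀ i j : Fin m, j ≠ i →
      (Sum.inl (j,(0:Fin 2))) ∈ G.neighborSet (.inl (i,(1:Fin 2))) := by
    intro i j hji; simp [G, mycK, SimpleGraph.fromRel_adj, hji, hji.symm]
  have hadj3 : ∀ i : Fin m, (Sum.inr ()) ∈ G.neighborSet (.inl (i,(1:Fin 2))) := by
    intro i; simp [G, mycK, SimpleGraph.fromRel_adj]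
  -- independence of the Xi family
  have hXind : ∀ (i : Fin m) (s : Finset (Fin m)), i ∉ s → Disjoint (Xi i) (s.sup Xi) := by
    intro i s hi
    refine (hdisj (.inl (i, 0))).mono_right (Finset.sup_le fun j hj => ?_)
    exact hle _ _ (hadj1 i j (fun h => hi (h ▸ hj)))
  -- notation
  set A : Fin m → Submodule F (Fin n → F) :=
    fun i => ((Finset.univ.erase i).sup Xi) with hA
  set t : Fin m → ℕ := fun i => finrank F (Z ⊓ A i : Submodule F (Fin n → F)) with ht
  have hcardn : finrank F (Fin n → F) = n := by simp
  have hAr : ∀ i, finrank F (A i : Submodule F (Fin n → F)) = (m - 1) * d := by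
    intro i
    rw [hA]
    rw [aux_rank hXind (fun j => hdim _)]
    congr 1
    rw [Finset.card_erase_of_mem (Finset.mem_univ i), Finset.card_univ, Fintype.card_fin]
  -- Fact 1
  have fact1 : ∀ i, (m + 1) * d ≤ n + t i := by
    intro i
    have hY : Disjoint (X (.inl (i, (1:Fin 2)))) (A i ⊔ Z) := by
      refine (hdisj (.inl (i, 1))).mono_right (sup_le (Finset.sup_le fun j hj => ?_) ?_)
      · exact hle _ _ (hadj2 i j (Finset.ne_of_mem_erase hj))
      · exact hle _ _ (hadj3 i)
    have h1 : finrank F (A i ⊔ Z : Submodule F (Fin n → F)) + t i = m * d := by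
      have hfr := Submodule.finrank_sup_add_finrank_inf_eq (A i) Z
      rw [hAr i, hdim] at hfr
      have hti : t i = finrank F (A i ⊓ Z : Submodule F (Fin n → F)) := by
        show finrank F (Z ⊓ A i : Submodule F (Fin n → F)) = _
        rw [inf_comm]
      rw [hti, hfr]
      have hsm : m - 1 + 1 = m := by omega
      calc (m - 1) * d + d = ((m - 1) + 1) * d := by ring
        _ = m * d := by rw [hsm]
    have h2 : d + finrank F (A i ⊔ Z : Submodule F (Fin n → F)) ≤ n := by
      have hsum := Submodule.finrank_sup_add_finrank_inf_eq (X (.inl (i, (1:Fin 2)))) (A i ⊔ Z)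
      rw [hY.eq_bot, finrank_bot, add_zero, hdim] at hsum
      calc d + finrank F (A i ⊔ Z : Submodule F (Fin n → F))
          = finrank F (X (.inl (i, (1:Fin 2))) ⊔ (A i ⊔ Z) : Submodule F (Fin n → F)) := hsum.symm
        _ ≤ finrank F (Fin n → F) := Submodule.finrank_le _
        _ = n := hcardn
    calc (m + 1) * d = d + m * d := by ring
      _ = (d + finrank F (A i ⊔ Z : Submodule F (Fin n → F))) + t i := by rw [← h1]; ring
      _ ≤ n + t i := Nat.add_le_add_right h2 _
  -- Fact 2
  have fact2 : (∑ i, t i) + d ≤ m * d := by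
    have claim : ∀ s : Finset (Fin m), s.Nonempty →
        (∑ i ∈ s, t i) + d ≤ s.card * d +
          finrank F (Z ⊓ ((Finset.univ \ s).sup Xi) : Submodule F (Fin n → F)) := by
      intro s
      induction s using Finset.induction with
      | empty => intro h; exact absurd rfl h.ne_empty
      | @insert a s ha ih =>
        intro _
        rcases s.eq_empty_or_nonempty with rfl | hs
        · have e1 : Finset.univ \ insert a (∅ : Finset (Fin m)) = Finset.univ.erase a := by
            ext x; simp [Finset.mem_erase, and_comm]
          rw [Finset.sum_insert (Finset.notMem_empty a), Finset.sum_empty, e1,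
            Finset.card_insert_of_notMem (Finset.notMem_empty a), Finset.card_empty]
          have hta : finrank F (Z ⊓ (Finset.univ.erase a).sup Xi : Submodule F (Fin n → F))
              = t a := rfl
          omega
        · have step : t a + finrank F (Z ⊓ ((Finset.univ \ s).sup Xi) : Submodule F (Fin n → F))
              ≤ d + finrank F (Z ⊓ ((Finset.univ \ insert a s).sup Xi) : Submodule F (Fin n → F)) := by
            have hkey := Submodule.finrank_sup_add_finrank_inf_eq
              (Z ⊓ A a) (Z ⊓ ((Finset.univ \ s).sup Xi))
            have hsupZ : finrank F ((Z ⊓ A a) ⊔ (Z ⊓ ((Finset.univ \ s).sup Xi)) :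
                Submodule F (Fin n → F)) ≤ d := by
              rw [← hdim (.inr ())]
              exact Submodule.finrank_mono (sup_le inf_le_left inf_le_left)
            have hinfle : ((Z ⊓ A a) ⊓ (Z ⊓ ((Finset.univ \ s).sup Xi)) : Submodule F (Fin n → F))
                ≤ Z ⊓ ((Finset.univ \ insert a s).sup Xi) := by
              refine le_inf (le_trans inf_le_left inf_le_left) ?_
              have h2 : ((Z ⊓ A a) ⊓ (Z ⊓ ((Finset.univ \ s).sup Xi)) : Submodule F (Fin n → F))
                  ≤ (Finset.univ.erase a).sup Xi ⊓ ((Finset.univ \ s).sup Xi) :=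
                inf_le_inf inf_le_right inf_le_right
              refine le_trans h2 (le_trans (aux_inf_sup hXind _ _) (Finset.sup_mono ?_))
              intro x hx
              simp only [Finset.mem_inter, Finset.mem_erase, Finset.mem_sdiff,
                Finset.mem_univ, true_and, Finset.mem_insert] at hx ⊢
              tauto
            have hinf : finrank F ((Z ⊓ A a) ⊓ (Z ⊓ ((Finset.univ \ s).sup Xi)) :
                Submodule F (Fin n → F))
                ≤ finrank F (Z ⊓ ((Finset.univ \ insert a s).sup Xi) : Submodule F (Fin n → F)) :=
              Submodule.finrank_mono hinfle
            have hta : t a = finrank F (Z ⊓ A a : Submodule F (Fin n → F)) := rfl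
            omega
          have ihs := ih hs
          rw [Finset.sum_insert ha, Finset.card_insert_of_notMem ha, add_mul, one_mul]
          omega
    haveI : Nonempty (Fin m) := ⟨⟨0, by omega⟩⟩
    have := claim Finset.univ Finset.univ_nonempty
    rw [Finset.sdiff_self, Finset.sup_empty, inf_bot_eq, finrank_bot, add_zero,
      Finset.card_univ, Fintype.card_fin] at this
    exact this
  -- combine
  have hsum : m * ((m + 1) * d) ≤ m * n + ∑ i, t i := by
    calc m * ((m + 1) * d) = ∑ _i : Fin m, (m + 1) * d := by
          rw [Finset.sum_const, Finset.card_univ, Fintype.card_fin, smul_eq_mul]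
      _ ≤ ∑ i : Fin m, (n + t i) := Finset.sum_le_sum fun i _ => fact1 i
      _ = m * n + ∑ i, t i := by
          rw [Finset.sum_add_distrib, Finset.sum_const, Finset.card_univ, Fintype.card_fin,
            smul_eq_mul]
  have key : (m * m + 1) * d ≤ m * n := by
    have h3 : (m * m + 1) * d + m * d ≤ m * n + m * d := by
      calc (m * m + 1) * d + m * d = m * ((m + 1) * d) + d := by ring
        _ ≤ (m * n + ∑ i, t i) + d := Nat.add_le_add_right hsum d
        _ = m * n + ((∑ i, t i) + d) := by ring
        _ ≤ m * n + m * d := Nat.add_le_add_left fact2 _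
    omega
  -- to the reals
  have hm0 : (0:ℝ) < m := by exact_mod_cast lt_of_lt_of_le (by norm_num) hm
  have hd0 : (0:ℝ) < d := by exact_mod_cast hd
  have keyR : ((m:ℝ) * m + 1) * d ≤ m * n := by exact_mod_cast key
  rw [le_div_iff₀ hd0]
  have heq : ((m:ℝ) + 1 / m) * d = (((m:ℝ) * m + 1) * d) / m := by
    field_simp
  rw [heq, div_le_iff₀ hm0]
  calc ((m:ℝ) * m + 1) * d ≤ (m:ℝ) * n := keyR
    _ = (n:ℝ) * m := by ring
end

section
/- If the generalized Mycielskian M_3(K_m) of the complete graph K_m (m ≥ 2) admits a dual (n,d)-representation over a field F, then n/d ≥ m + 1/(m² − m + 1). -/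
open Module

section aux

variable {F V : Type*} [Field F] [AddCommGroup V] [Module F V] [FiniteDimensional F V]
variable {ι : Type*} [DecidableEq ι]

/-- The rank of a supremum of pairwise-independent submodules is the sum of ranks. -/
private lemma myck_finrank_biSup_eq_sum (f : ι → Submodule F V) (s : Finset ι)
    (h : ∀ i ∈ s, Disjoint (f i) (⨆ j ∈ s.erase i, f j)) :
    finrank F ↥(⨆ i ∈ s, f i) = ∑ i ∈ s, finrank F ↥(f i) := by
  induction s using Finset.induction_on with
  | empty => simp
  | @insert a s ha ih =>
    rw [Finset.iSup_insert, Finset.sum_insert ha]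
    have hdisj : Disjoint (f a) (⨆ j ∈ s, f j) := by
      have := h a (Finset.mem_insert_self a s)
      rwa [Finset.erase_insert ha] at this
    have heq := Submodule.finrank_sup_add_finrank_inf_eq (f a) (⨆ j ∈ s, f j)
    rw [disjoint_iff.mp hdisj, finrank_bot, add_zero] at heq
    rw [heq, ih ?_]
    intro i hi
    refine (h i (Finset.mem_insert_of_mem hi)).mono_right (biSup_mono fun j hj => ?_)
    exact Finset.erase_subset_erase i (Finset.subset_insert a s) hj

/-- Lower bound on the rank of a finite infimum. -/
private lemma myck_inf_lower (g : ι → Submodule F V) (s : Finset ι) :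
    finrank F V + ∑ j ∈ s, finrank F ↥(g j) ≤
      finrank F ↥(⨅ j ∈ s, g j) + s.card * finrank F V := by
  induction s using Finset.induction_on with
  | empty =>
    have htop : (⨅ j ∈ (∅ : Finset ι), g j) = ⊤ := by simp
    rw [htop, finrank_top]
    simp
  | @insert a s ha ih =>
    rw [Finset.iInf_insert, Finset.sum_insert ha, Finset.card_insert_of_notMem ha]
    have heq := Submodule.finrank_sup_add_finrank_inf_eq (g a) (⨅ j ∈ s, g j)
    have hle : finrank F ↥(g a ⊔ ⨅ j ∈ s, g j) ≤ finrank F V :=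
      Submodule.finrank_le _
    have hc : (s.card + 1) * finrank F V = s.card * finrank F V + finrank F V := by ring
    rw [hc]
    linarith

/-- Lower bound on the rank of a finite supremum with overlaps bounded by `k`. -/
private lemma myck_sup_overlap (f : ι → Submodule F V) (k : ℕ) (s : Finset ι)
    (h : ∀ a ∈ s, ∀ t : Finset ι, t ⊆ s → a ∉ t →
        finrank F ↥(f a ⊓ ⨆ i ∈ t, f i) ≤ k) :
    ∑ i ∈ s, finrank F ↥(f i) ≤ finrank F ↥(⨆ i ∈ s, f i) + (s.card - 1) * k := by
  induction s using Finset.induction_on with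
  | empty => simp
  | @insert a s ha ih =>
    rw [Finset.iSup_insert, Finset.sum_insert ha, Finset.card_insert_of_notMem ha]
    have heq := Submodule.finrank_sup_add_finrank_inf_eq (f a) (⨆ i ∈ s, f i)
    have hov : finrank F ↥(f a ⊓ ⨆ i ∈ s, f i) ≤ k :=
      h a (Finset.mem_insert_self a s) s (Finset.subset_insert a s) ha
    have ihs : ∑ i ∈ s, finrank F ↥(f i) ≤ finrank F ↥(⨆ i ∈ s, f i) + (s.card - 1) * k := by
      refine ih fun b hb t ht hbt => ?_
      exact h b (Finset.mem_insert_of_mem hb) t (ht.trans (Finset.subset_insert a s)) hbt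
    rcases s.eq_empty_or_nonempty with rfl | hne
    · have hbot : (⨆ i ∈ (∅ : Finset ι), f i) = ⊥ := by simp
      rw [hbot, sup_bot_eq]
      simp [hbot]
    · have hc : s.card - 1 + 1 = s.card := Nat.succ_pred_eq_of_pos (Finset.card_pos.mpr hne)
      have h2 : (s.card + 1 - 1) * k = (s.card - 1) * k + k := by
        rw [Nat.add_sub_cancel, ← hc, Nat.succ_mul, hc]
      rw [h2]
      linarith

/-- Modular-lattice peeling: inside the span of an independent family, the
intersection of the spans of the complements of the indices in `t` is contained in
the span over the complement of `t`. -/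
private lemma myck_modular [Fintype ι] (A : ι → Submodule F V)
    (hind : ∀ i, Disjoint (A i) (⨆ k ∈ Finset.univ.erase i, A k)) (t : Finset ι) :
    (⨆ k ∈ (Finset.univ : Finset ι), A k) ⊓ (⨅ j ∈ t, ⨆ k ∈ Finset.univ.erase j, A k)
      ≤ ⨆ k ∈ Finset.univ \ t, A k := by
  induction t using Finset.induction_on with
  | empty => simp
  | @insert j t hj ih =>
    rw [Finset.iInf_insert]
    set S := ⨆ k ∈ (Finset.univ : Finset ι), A k with hS
    set P := ⨆ k ∈ Finset.univ.erase j, A k with hP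
    set Q := ⨅ j' ∈ t, ⨆ k ∈ Finset.univ.erase j', A k with hQ
    have h1 : S ⊓ (P ⊓ Q) ≤ (⨆ k ∈ Finset.univ \ t, A k) ⊓ P := by
      refine le_inf (le_trans ?_ ih) ?_
      · exact inf_le_inf_left S inf_le_right
      · exact le_trans inf_le_right inf_le_left
    refine h1.trans ?_
    have hjmem : j ∈ Finset.univ \ t := by simp [hj]
    have hsplit : (⨆ k ∈ Finset.univ \ t, A k)
        = A j ⊔ ⨆ k ∈ (Finset.univ \ t).erase j, A k := by
      conv_lhs => rw [← Finset.insert_erase hjmem]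
      rw [Finset.iSup_insert]
    have hW : (⨆ k ∈ (Finset.univ \ t).erase j, A k) ≤ P := by
      refine biSup_mono fun k hk => ?_
      exact Finset.mem_erase.mpr ⟨(Finset.mem_erase.mp hk).1, Finset.mem_univ k⟩
    have hset : (Finset.univ \ t).erase j = Finset.univ \ insert j t := by
      ext k
      simp only [Finset.mem_erase, Finset.mem_sdiff, Finset.mem_univ, true_and,
        Finset.mem_insert]
      tauto
    have hjP : A j ⊓ P = ⊥ := by rw [hP]; exact disjoint_iff.mp (hind j)
    rw [hsplit, sup_comm (A j) (⨆ k ∈ (Finset.univ \ t).erase j, A k),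
      sup_inf_assoc_of_le (A j) hW, hjP, sup_bot_eq, hset]

end aux

set_option maxHeartbeats 1600000 in
theorem haemers_lower_bound_M3 (F : Type*) [Field F] (m n d : ℕ) (hm : 2 ≤ m)
    (hd : 0 < d)
    (X : (Fin m × Fin 3) ⊕ Unit → Submodule F (Fin n → F))
    (hdim : ∀ u, finrank F (X u) = d)
    (hrep : ∀ u, X u ⊓ (⨆ w ∈ (mycK m 3).neighborSet u, X w) = ⊥) :
    (m : ℝ) + 1 / ((m : ℝ) ^ 2 - m + 1) ≤ (n : ℝ) / d := by
  classical
  obtain ⟨e, rfl⟩ : ∃ e, m = e + 1 := ⟨m - 1, by omega⟩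
  have he : 1 ≤ e := by omega
  have hV : finrank F (Fin n → F) = n := by
    simp [Module.finrank_fin_fun]
  -- disjointness from the representation
  have hdisj : ∀ (u) (p : Submodule F (Fin n → F)),
      p ≤ (⨆ w ∈ (mycK (e + 1) 3).neighborSet u, X w) → Disjoint (X u) p := by
    intro u p hp
    exact (disjoint_iff.mpr (hrep u)).mono_right hp
  have hle : ∀ u w, (mycK (e + 1) 3).Adj u w →
      X w ≤ ⨆ w ∈ (mycK (e + 1) 3).neighborSet u, X w := by
    intro u w h
    exact le_iSup₂ (f := fun w _ => X w) w (((mycK (e + 1) 3).mem_neighborSet u w).mpr h)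
  -- adjacency facts
  have adj00 : ∀ {i j : Fin (e + 1)}, i ≠ j →
      (mycK (e + 1) 3).Adj (.inl (i, (0 : Fin 3))) (.inl (j, (0 : Fin 3))) := by
    intro i j hij
    unfold mycK
    rw [SimpleGraph.fromRel_adj]
    constructor
    · intro hcon
      rw [Sum.inl.injEq, Prod.mk.injEq] at hcon
      exact hij hcon.1
    · exact Or.inl ⟨hij, Or.inl ⟨rfl, rfl⟩⟩
  have adj10 : ∀ {i j : Fin (e + 1)}, i ≠ j →
      (mycK (e + 1) 3).Adj (.inl (i, (1 : Fin 3))) (.inl (j, (0 : Fin 3))) := by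
    intro i j hij
    unfold mycK
    rw [SimpleGraph.fromRel_adj]
    constructor
    · intro hcon
      rw [Sum.inl.injEq, Prod.mk.injEq] at hcon
      exact absurd hcon.2 (by decide)
    · exact Or.inr ⟨hij.symm, Or.inr (show ((1 : Fin 3) : ℕ) = ((0 : Fin 3) : ℕ) + 1 by decide)⟩
  have adj12 : ∀ {i j : Fin (e + 1)}, i ≠ j →
      (mycK (e + 1) 3).Adj (.inl (i, (1 : Fin 3))) (.inl (j, (2 : Fin 3))) := by
    intro i j hij
    unfold mycK
    rw [SimpleGraph.fromRel_adj]
    constructor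
    · intro hcon
      rw [Sum.inl.injEq, Prod.mk.injEq] at hcon
      exact absurd hcon.2 (by decide)
    · exact Or.inl ⟨hij, Or.inr (show ((2 : Fin 3) : ℕ) = ((1 : Fin 3) : ℕ) + 1 by decide)⟩
  have adjz2 : ∀ j : Fin (e + 1), (mycK (e + 1) 3).Adj (.inr ()) (.inl (j, (2 : Fin 3))) := by
    intro j
    unfold mycK
    rw [SimpleGraph.fromRel_adj]
    constructor
    · simp
    · exact Or.inr (show ((2 : Fin 3) : ℕ) = 3 - 1 by decide)
  -- key disjointness facts
  have hD1 : ∀ i, Disjoint (X (.inl (i, (0 : Fin 3))))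
      (⨆ k ∈ Finset.univ.erase i, X (.inl (k, (0 : Fin 3)))) := by
    intro i
    refine hdisj _ _ (iSup₂_le fun k hk => ?_)
    exact hle _ _ (adj00 ((Finset.mem_erase.mp hk).1.symm))
  have hD2 : ∀ i, Disjoint (X (.inl (i, (1 : Fin 3))))
      ((⨆ k ∈ Finset.univ.erase i, X (.inl (k, (0 : Fin 3))))
        ⊔ (⨆ k ∈ Finset.univ.erase i, X (.inl (k, (2 : Fin 3))))) := by
    intro i
    refine hdisj _ _ (sup_le (iSup₂_le fun k hk => ?_) (iSup₂_le fun k hk => ?_))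
    · exact hle _ _ (adj10 ((Finset.mem_erase.mp hk).1.symm))
    · exact hle _ _ (adj12 ((Finset.mem_erase.mp hk).1.symm))
  have hD4 : Disjoint (X (.inr ()))
      (⨆ k ∈ (Finset.univ : Finset (Fin (e + 1))), X (.inl (k, (2 : Fin 3)))) := by
    refine hdisj _ _ (iSup₂_le fun k _ => ?_)
    exact hle _ _ (adjz2 k)
  -- ranks of the independent level-0 sums
  have hSneg_rank : ∀ j : Fin (e + 1),
      finrank F ↥(⨆ k ∈ Finset.univ.erase j, X (.inl (k, (0 : Fin 3)))) = e * d := by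
    intro j
    rw [myck_finrank_biSup_eq_sum]
    · rw [Finset.sum_congr rfl fun i _ => hdim (.inl (i, (0 : Fin 3))), Finset.sum_const,
        smul_eq_mul, Finset.card_erase_of_mem (Finset.mem_univ j), Finset.card_univ,
        Fintype.card_fin, Nat.add_sub_cancel]
    · intro i hi
      refine (hD1 i).mono_right (biSup_mono fun k hk => ?_)
      exact Finset.mem_erase.mpr ⟨(Finset.mem_erase.mp hk).1, Finset.mem_univ k⟩
  have hS_rank : finrank F ↥(⨆ k ∈ (Finset.univ : Finset (Fin (e + 1))),
      X (.inl (k, (0 : Fin 3)))) = (e + 1) * d := by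
    rw [myck_finrank_biSup_eq_sum]
    · rw [Finset.sum_congr rfl fun i _ => hdim (.inl (i, (0 : Fin 3))), Finset.sum_const,
        smul_eq_mul, Finset.card_univ, Fintype.card_fin]
    · exact fun i _ => hD1 i
  have hmd : (e + 1) * d ≤ n := by
    have := Submodule.finrank_le (⨆ k ∈ (Finset.univ : Finset (Fin (e + 1))),
      X (.inl (k, (0 : Fin 3))))
    rwa [hS_rank, hV] at this
  -- rank of B j ⊔ Sneg j
  have hBS_rank : ∀ j : Fin (e + 1),
      finrank F ↥(X (.inl (j, (1 : Fin 3))) ⊔ ⨆ k ∈ Finset.univ.erase j,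
        X (.inl (k, (0 : Fin 3)))) = d + e * d := by
    intro j
    have hdis : Disjoint (X (.inl (j, (1 : Fin 3))))
        (⨆ k ∈ Finset.univ.erase j, X (.inl (k, (0 : Fin 3)))) :=
      (hD2 j).mono_right le_sup_left
    have heq := Submodule.finrank_sup_add_finrank_inf_eq (X (.inl (j, (1 : Fin 3))))
      (⨆ k ∈ Finset.univ.erase j, X (.inl (k, (0 : Fin 3))))
    rw [disjoint_iff.mp hdis, finrank_bot, add_zero, hdim, hSneg_rank] at heq
    exact heq
  -- rank of the big intersection T
  have hT_rank : n + (e + 1) * (d + e * d) ≤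
      finrank F ↥(⨅ j ∈ (Finset.univ : Finset (Fin (e + 1))),
        (X (.inl (j, (1 : Fin 3))) ⊔ ⨆ k ∈ Finset.univ.erase j, X (.inl (k, (0 : Fin 3)))))
      + (e + 1) * n := by
    have := myck_inf_lower (fun j : Fin (e + 1) =>
      X (.inl (j, (1 : Fin 3))) ⊔ ⨆ k ∈ Finset.univ.erase j, X (.inl (k, (0 : Fin 3))))
      Finset.univ
    rw [hV, Finset.sum_congr rfl fun j _ => hBS_rank j, Finset.sum_const, smul_eq_mul,
      Finset.card_univ, Fintype.card_fin] at this
    exact this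
  -- overlap bound
  have hover : ∀ a : Fin (e + 1), ∀ t : Finset (Fin (e + 1)), a ∉ t →
      finrank F ↥(X (.inl (a, (2 : Fin 3))) ⊓ ⨆ i ∈ t, X (.inl (i, (2 : Fin 3))))
        + (e + 1) * ((e + 1) * d) ≤ (e + 1) * n := by
    intro a t hat
    have hK : Disjoint (X (.inl (a, (2 : Fin 3))) ⊓ ⨆ i ∈ t, X (.inl (i, (2 : Fin 3))))
        (⨅ j ∈ (Finset.univ : Finset (Fin (e + 1))),
          (X (.inl (j, (1 : Fin 3))) ⊔ ⨆ k ∈ Finset.univ.erase j,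
            X (.inl (k, (0 : Fin 3))))) := by
      rw [Submodule.disjoint_def]
      intro x hx hxT
      obtain ⟨hxa, hxt⟩ := Submodule.mem_inf.mp hx
      have hxS : ∀ j : Fin (e + 1),
          x ∈ (⨆ k ∈ Finset.univ.erase j, X (.inl (k, (0 : Fin 3)))) := by
        intro j
        have hxTj : x ∈ X (.inl (j, (1 : Fin 3))) ⊔ ⨆ k ∈ Finset.univ.erase j,
            X (.inl (k, (0 : Fin 3))) :=
          (Submodule.mem_iInf _).mp ((Submodule.mem_iInf _).mp hxT j) (Finset.mem_univ j)
        obtain ⟨b, hb, s, hs, hbs⟩ := Submodule.mem_sup.mp hxTj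
        have hxC : x ∈ ⨆ k ∈ Finset.univ.erase j, X (.inl (k, (2 : Fin 3))) := by
          by_cases hja : j = a
          · subst hja
            have hsub : (⨆ i ∈ t, X (.inl (i, (2 : Fin 3)))) ≤
                ⨆ k ∈ Finset.univ.erase j, X (.inl (k, (2 : Fin 3))) := by
              refine biSup_mono fun k hk => ?_
              exact Finset.mem_erase.mpr ⟨fun h => hat (h ▸ hk), Finset.mem_univ k⟩
            exact hsub hxt
          · have hsub : X (.inl (a, (2 : Fin 3))) ≤
                ⨆ k ∈ Finset.univ.erase j, X (.inl (k, (2 : Fin 3))) :=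
              le_iSup₂ (f := fun k (_ : k ∈ Finset.univ.erase j) =>
                X (.inl (k, (2 : Fin 3)))) a
                (Finset.mem_erase.mpr ⟨fun h => hja h.symm, Finset.mem_univ a⟩)
            exact hsub hxa
        have hb0 : b = 0 := by
          have hbeq : b = x - s := by rw [← hbs]; abel
          have hbmem : b ∈ (⨆ k ∈ Finset.univ.erase j, X (.inl (k, (0 : Fin 3))))
              ⊔ (⨆ k ∈ Finset.univ.erase j, X (.inl (k, (2 : Fin 3)))) := by
            rw [hbeq]
            have hs1 : (⨆ k ∈ Finset.univ.erase j, X (.inl (k, (2 : Fin 3)))) ≤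
                (⨆ k ∈ Finset.univ.erase j, X (.inl (k, (0 : Fin 3))))
                ⊔ (⨆ k ∈ Finset.univ.erase j, X (.inl (k, (2 : Fin 3)))) := le_sup_right
            have hs2 : (⨆ k ∈ Finset.univ.erase j, X (.inl (k, (0 : Fin 3)))) ≤
                (⨆ k ∈ Finset.univ.erase j, X (.inl (k, (0 : Fin 3))))
                ⊔ (⨆ k ∈ Finset.univ.erase j, X (.inl (k, (2 : Fin 3)))) := le_sup_left
            exact Submodule.sub_mem _ (hs1 hxC) (hs2 hs)
          exact Submodule.disjoint_def.mp (hD2 j) b hb hbmem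
        rw [hb0, zero_add] at hbs
        rw [← hbs]; exact hs
      have hxSS : x ∈ ⨆ k ∈ (Finset.univ : Finset (Fin (e + 1))),
          X (.inl (k, (0 : Fin 3))) := by
        have hsub : (⨆ k ∈ Finset.univ.erase a, X (.inl (k, (0 : Fin 3)))) ≤
            ⨆ k ∈ (Finset.univ : Finset (Fin (e + 1))), X (.inl (k, (0 : Fin 3))) :=
          biSup_mono fun k _ => Finset.mem_univ k
        exact hsub (hxS a)
      have hxInf : x ∈ ⨅ j ∈ (Finset.univ : Finset (Fin (e + 1))),
          ⨆ k ∈ Finset.univ.erase j, X (.inl (k, (0 : Fin 3))) := by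
        refine (Submodule.mem_iInf _).mpr fun j => ?_
        exact (Submodule.mem_iInf _).mpr fun _ => hxS j
      have hxbot := myck_modular (fun k => X (.inl (k, (0 : Fin 3)))) hD1 Finset.univ
        (Submodule.mem_inf.mpr ⟨hxSS, hxInf⟩)
      simpa using hxbot
    have h1 : finrank F ↥(X (.inl (a, (2 : Fin 3))) ⊓ ⨆ i ∈ t, X (.inl (i, (2 : Fin 3))))
        + finrank F ↥(⨅ j ∈ (Finset.univ : Finset (Fin (e + 1))),
          (X (.inl (j, (1 : Fin 3))) ⊔ ⨆ k ∈ Finset.univ.erase j,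
            X (.inl (k, (0 : Fin 3))))) ≤ n := by
      have heq := Submodule.finrank_sup_add_finrank_inf_eq
        (X (.inl (a, (2 : Fin 3))) ⊓ ⨆ i ∈ t, X (.inl (i, (2 : Fin 3))))
        (⨅ j ∈ (Finset.univ : Finset (Fin (e + 1))),
          (X (.inl (j, (1 : Fin 3))) ⊔ ⨆ k ∈ Finset.univ.erase j,
            X (.inl (k, (0 : Fin 3)))))
      rw [disjoint_iff.mp hK, finrank_bot, add_zero] at heq
      have hle2 := Submodule.finrank_le
        ((X (.inl (a, (2 : Fin 3))) ⊓ ⨆ i ∈ t, X (.inl (i, (2 : Fin 3))))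
          ⊔ ⨅ j ∈ (Finset.univ : Finset (Fin (e + 1))),
            (X (.inl (j, (1 : Fin 3))) ⊔ ⨆ k ∈ Finset.univ.erase j,
              X (.inl (k, (0 : Fin 3)))))
      rw [hV] at hle2
      linarith
    have hmm : (e + 1) * (d + e * d) = (e + 1) * ((e + 1) * d) := by ring
    linarith [hT_rank]
  -- assemble the main count
  set k : ℕ := (e + 1) * n - (e + 1) * ((e + 1) * d) with hkdef
  have hkb : ∀ a : Fin (e + 1), ∀ t : Finset (Fin (e + 1)), a ∉ t →
      finrank F ↥(X (.inl (a, (2 : Fin 3))) ⊓ ⨆ i ∈ t, X (.inl (i, (2 : Fin 3)))) ≤ k :=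
    fun a t hat => Nat.le_sub_of_add_le (hover a t hat)
  have hsupC : ∑ i ∈ (Finset.univ : Finset (Fin (e + 1))),
      finrank F ↥(X (.inl (i, (2 : Fin 3))))
      ≤ finrank F ↥(⨆ i ∈ (Finset.univ : Finset (Fin (e + 1))), X (.inl (i, (2 : Fin 3))))
        + ((Finset.univ : Finset (Fin (e + 1))).card - 1) * k :=
    myck_sup_overlap (fun i => X (.inl (i, (2 : Fin 3)))) k Finset.univ
      (fun a _ t _ hat => hkb a t hat)
  have hsum : ∑ i ∈ (Finset.univ : Finset (Fin (e + 1))),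
      finrank F ↥(X (.inl (i, (2 : Fin 3)))) = (e + 1) * d := by
    rw [Finset.sum_congr rfl fun i _ => hdim (.inl (i, (2 : Fin 3))), Finset.sum_const,
      smul_eq_mul, Finset.card_univ, Fintype.card_fin]
  have hcard : ((Finset.univ : Finset (Fin (e + 1))).card - 1) = e := by
    rw [Finset.card_univ, Fintype.card_fin, Nat.add_sub_cancel]
  have hZC : d + finrank F ↥(⨆ i ∈ (Finset.univ : Finset (Fin (e + 1))),
      X (.inl (i, (2 : Fin 3)))) ≤ n := by
    have heq := Submodule.finrank_sup_add_finrank_inf_eq (X (.inr ()))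
      (⨆ i ∈ (Finset.univ : Finset (Fin (e + 1))), X (.inl (i, (2 : Fin 3))))
    rw [disjoint_iff.mp hD4, finrank_bot, add_zero, hdim] at heq
    have hle2 := Submodule.finrank_le
      (X (.inr ()) ⊔ ⨆ i ∈ (Finset.univ : Finset (Fin (e + 1))), X (.inl (i, (2 : Fin 3))))
    rw [hV] at hle2
    linarith
  rw [hsum, hcard] at hsupC
  -- the final natural-number inequality
  have hmain : (e + 1) * d + d ≤ n + e * k := by linarith
  -- pass to the reals
  have hmulle : (e + 1) * ((e + 1) * d) ≤ (e + 1) * n :=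
    Nat.mul_le_mul (le_refl (e + 1)) hmd
  have hkcast : (k : ℝ) = ((e : ℝ) + 1) * n - ((e : ℝ) + 1) * (((e : ℝ) + 1) * d) := by
    rw [hkdef, Nat.cast_sub hmulle]
    push_cast
    ring
  have hmain' : ((e : ℝ) + 1) * d + d ≤ (n : ℝ) + e * k := by exact_mod_cast hmain
  rw [hkcast] at hmain'
  have hE : (1 : ℝ) ≤ (e : ℝ) := by exact_mod_cast he
  have hD : (0 : ℝ) < (d : ℝ) := by exact_mod_cast hd
  have hq : (0 : ℝ) < ((e : ℝ) + 1) ^ 2 - ((e : ℝ) + 1) + 1 := by nlinarith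
  have key : ((((e : ℝ) + 1) * (((e : ℝ) + 1) ^ 2 - ((e : ℝ) + 1) + 1)) + 1) * d
      ≤ (((e : ℝ) + 1) ^ 2 - ((e : ℝ) + 1) + 1) * n := by nlinarith [hmain']
  have final : ((e : ℝ) + 1) + 1 / (((e : ℝ) + 1) ^ 2 - ((e : ℝ) + 1) + 1)
      ≤ (n : ℝ) / d := by
    rw [le_div_iff₀ hD]
    have hexp : (((e : ℝ) + 1) + 1 / (((e : ℝ) + 1) ^ 2 - ((e : ℝ) + 1) + 1)) * d
        = (((((e : ℝ) + 1) * (((e : ℝ) + 1) ^ 2 - ((e : ℝ) + 1) + 1)) + 1) * d)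
          / (((e : ℝ) + 1) ^ 2 - ((e : ℝ) + 1) + 1) := by
      rw [eq_div_iff hq.ne']
      have h1 : 1 / (((e : ℝ) + 1) ^ 2 - ((e : ℝ) + 1) + 1)
          * (((e : ℝ) + 1) ^ 2 - ((e : ℝ) + 1) + 1) = 1 := one_div_mul_cancel hq.ne'
      linear_combination (d : ℝ) * h1
    rw [hexp, div_le_iff₀ hq]
    linarith [key]
  have hgoal : (((e + 1 : ℕ)) : ℝ) = (e : ℝ) + 1 := by push_cast; ring
  rw [hgoal]
  exact final
end
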